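/- Suppose e ≥ 3 and λ is a k-empty partition. Then the map ξ ↦ ξ^{-k} (removal of runner d from the e-runner abacus) is a bijection from the set of k-empty partitions with the same e-core as λ to the set of partitions with the same (e-1)-core as λ^{-k}. Moreover, for any k-empty ξ with the same e-core as λ, one has ξ ⊵_e λ if and only if ξ^{-k} ⊵_{e-1} λ^{-k}. -/

import Mathlib

open scoped BigOperators

def IsPartition (f : ℕ → ℕ) : Prop :=
  (∀ ⦃i j : ℕ⦄, i ≤ j → f j ≤ f i) ∧ ∃ N : ℕ, ∀ i, N ≤ i → f i = 0

noncomputable def conj (f : ℕ → ℕ) (i : ℕ) : ℕ := Nat.card {j : ℕ // i + 1 ≤ f j}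

def betaSet (f : ℕ → ℕ) (r : ℕ) : Multiset ℕ :=
  (Multiset.range r).map fun i => f i + (r - 1 - i)

/-- e-extension of a multiset: z gets multiplicity |B ∩ {z, z+e, z+2e, …}|. -/
def eExt (e : ℕ) (B : Multiset ℕ) : Multiset ℕ :=
  B.bind fun b => (Multiset.range (b / e + 1)).map fun j => b - j * e

def runnerCount (e d : ℕ) (B : Multiset ℕ) : ℕ :=
  Multiset.card (B.filter fun b => b % e = d)

/-- Beta-multiset of the e-core: slide all beads up their runners. -/
def coreBeta (e : ℕ) (B : Multiset ℕ) : Multiset ℕ :=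
  (Multiset.range e).bind fun j =>
    (Multiset.range (runnerCount e j B)).map fun i => j + i * e

/-- Weight multiset 𝔚: records the start of each single-step slide; equivalently
determined by 𝔛 = 𝔛(core) ⊔ 𝔚. -/
def weightMS (e : ℕ) (B : Multiset ℕ) : Multiset ℕ :=
  eExt e B - eExt e (coreBeta e B)

def eWeight (e : ℕ) (B : Multiset ℕ) : ℕ := Multiset.card (weightMS e B)

def DomMS (I J : Multiset ℕ) : Prop := Multiset.Rel (fun a b => b ≤ a) I J

/-- refined dominance order: same e-core and 𝔛^e_r(g) ⪰ 𝔛^e_r(f). -/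
def Dominates (e r : ℕ) (g f : ℕ → ℕ) : Prop :=
  coreBeta e (betaSet g r) = coreBeta e (betaSet f r) ∧
    DomMS (eExt e (betaSet g r)) (eExt e (betaSet f r))
/-- k-empty: all beads on runner d = (r+k) mod e are as high as possible. -/
def KEmpty (e k r : ℕ) (f : ℕ → ℕ) : Prop :=
  ∀ b ∈ betaSet f r, b % e = (r + k) % e →
    b < (r + k) % e + runnerCount e ((r + k) % e) (betaSet f r) * e

/-- 𝔏_k(λ): number of elements (with multiplicity) of 𝔛^e_r(λ) greater than d + c·e. -/
def Lk (e k r : ℕ) (f : ℕ → ℕ) : ℕ :=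
  Multiset.card <| (eExt e (betaSet f r)).filter fun x =>
    (r + k) % e + runnerCount e ((r + k) % e) (betaSet f r) * e < x
def phi (e d z : ℕ) : ℕ := z - (z + e - d) / e

def removeRunnerB (e d : ℕ) (B : Multiset ℕ) : Multiset ℕ :=
  (B.filter fun b => ¬ b % e = d).map (phi e d)

/-- the partition whose beta-set is the multiset C (sorted descending, subtract staircase). -/
def partOfBeta (C : Multiset ℕ) : ℕ → ℕ := fun i =>
  ((C.sort (· ≤ ·)).reverse.getD i 0) - (Multiset.card C - 1 - i)

/-- λ^{-k}: remove runner d = (r+k) mod e from the r-bead abacus display of λ. -/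
def removeRunnerP (e k r : ℕ) (f : ℕ → ℕ) : ℕ → ℕ :=
  partOfBeta (removeRunnerB e ((r + k) % e) (betaSet f r))

lemma phi_eq' {e d : ℕ} (he : 2 ≤ e) (hd : d < e) (m j : ℕ) (hj : j < e) (hjd : j ≠ d) :
    phi e d (e * m + j) = (e - 1) * m + (if j < d then j else j - 1) := by
  have h1 : e * m + j + e - d = (j + e - d) + e * m := by omega
  have h2 : (j + e - d) / e = if j < d then 0 else 1 := by
    split
    · exact Nat.div_eq_of_lt (by omega)
    · rw [Nat.div_eq_sub_div (by omega) (by omega), Nat.div_eq_of_lt (by omega)]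
  have h3 : ((j + e - d) + e * m) / e = (j + e - d) / e + m := by
    rw [Nat.add_mul_div_left _ _ (by omega : 0 < e)]
  have hm : e * m = (e - 1) * m + m := by
    cases e with
    | zero => omega
    | succ e' => simp [Nat.succ_sub_one, Nat.succ_mul]
  unfold phi
  rw [h1, h3, h2]
  revert hm
  generalize e * m = P
  generalize (e - 1) * m = Q
  intro hm
  split <;> omega

lemma phi_decomp {e d : ℕ} (he : 2 ≤ e) (hd : d < e) {z : ℕ} (hz : z % e ≠ d) :
    phi e d z = (e - 1) * (z / e) + (if z % e < d then z % e else z % e - 1) := by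
  conv_lhs => rw [← Nat.div_add_mod z e, Nat.mul_comm]
  rw [Nat.mul_comm]
  exact phi_eq' he hd (z / e) (z % e) (Nat.mod_lt _ (by omega)) hz

lemma phi_lt_phi {e d : ℕ} (he : 2 ≤ e) (hd : d < e) {a b : ℕ}
    (ha : a % e ≠ d) (hb : b % e ≠ d) (hab : a < b) :
    phi e d a < phi e d b := by
  have he0 : 0 < e := by omega
  rw [phi_decomp he hd ha, phi_decomp he hd hb]
  have hja : a % e < e := Nat.mod_lt _ he0
  have hjb : b % e < e := Nat.mod_lt _ he0
  have hea : e * (a / e) + a % e = a := Nat.div_add_mod a e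
  have heb : e * (b / e) + b % e = b := Nat.div_add_mod b e
  have hja' : (if a % e < d then a % e else a % e - 1) < e - 1 := by split <;> omega
  have hjb' : (if b % e < d then b % e else b % e - 1) < e - 1 := by split <;> omega
  rcases lt_trichotomy (a / e) (b / e) with h | h | h
  · have h1 : (e - 1) * (a / e + 1) ≤ (e - 1) * (b / e) := Nat.mul_le_mul_left _ (by omega)
    have h2 : (e - 1) * (a / e + 1) = (e - 1) * (a / e) + (e - 1) := Nat.mul_succ _ _
    revert h1 h2 hja' hjb'
    generalize (e - 1) * (a / e) = A
    generalize (e - 1) * (b / e) = B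
    generalize (e - 1) * (a / e + 1) = A'
    intros; omega
  · rw [h]
    have hjj : a % e < b % e := by
      rw [← hea, ← heb, h] at hab
      omega
    have : (if a % e < d then a % e else a % e - 1) < (if b % e < d then b % e else b % e - 1) := by
      split <;> split <;> omega
    omega
  · exfalso
    have h1 : e * (b / e + 1) ≤ e * (a / e) := Nat.mul_le_mul_left _ (by omega)
    have h2 : e * (b / e + 1) = e * (b / e) + e := Nat.mul_succ _ _
    omega

lemma phi_le_phi {e d : ℕ} (he : 2 ≤ e) (hd : d < e) {a b : ℕ}
    (ha : a % e ≠ d) (hb : b % e ≠ d) (hab : a ≤ b) :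
    phi e d a ≤ phi e d b := by
  rcases Nat.lt_or_ge a b with h | h
  · exact (phi_lt_phi he hd ha hb h).le
  · have : a = b := by omega
    subst this; rfl

lemma phi_injOn {e d : ℕ} (he : 2 ≤ e) (hd : d < e) {a b : ℕ}
    (ha : a % e ≠ d) (hb : b % e ≠ d) (hab : phi e d a = phi e d b) : a = b := by
  rcases lt_trichotomy a b with h | h | h
  · exact absurd hab (phi_lt_phi he hd ha hb h).ne
  · exact h
  · exact absurd hab.symm (phi_lt_phi he hd hb ha h).ne

lemma phi_mod_div {e d : ℕ} (he : 2 ≤ e) (hd : d < e) {z : ℕ} (hz : z % e ≠ d) :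
    phi e d z % (e - 1) = (if z % e < d then z % e else z % e - 1) ∧
      phi e d z / (e - 1) = z / e := by
  have he0 : 0 < e := by omega
  have hje : z % e < e := Nat.mod_lt _ he0
  have hj : (if z % e < d then z % e else z % e - 1) < e - 1 := by split <;> omega
  rw [phi_decomp he hd hz]
  constructor
  · rw [Nat.add_comm, Nat.add_mul_mod_self_left]
    exact Nat.mod_eq_of_lt hj
  · rw [Nat.add_comm, Nat.add_mul_div_left _ _ (by omega : 0 < e - 1),
      Nat.div_eq_of_lt hj]
    omega

lemma phi_sub {e d : ℕ} (he : 2 ≤ e) (hd : d < e) {z : ℕ} (hz : z % e ≠ d)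
    {t : ℕ} (ht : t ≤ z / e) :
    phi e d (z - t * e) = phi e d z - t * (e - 1) := by
  have he0 : 0 < e := by omega
  have hzz : z = e * (z / e) + z % e := (Nat.div_add_mod z e).symm
  have h1 : e * (z / e - t) = e * (z / e) - e * t := Nat.mul_sub _ _ _
  have h2 : e * t = t * e := Nat.mul_comm _ _
  have het : e * t ≤ e * (z / e) := Nat.mul_le_mul_left _ ht
  have hsub : z - t * e = e * (z / e - t) + z % e := by omega
  have hmod : (z - t * e) % e = z % e := by
    conv_lhs => rw [hsub, Nat.add_comm, Nat.mul_comm, Nat.add_mul_mod_self_right]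
    exact Nat.mod_eq_of_lt (Nat.mod_lt _ (by omega))
  rw [hsub]
  rw [phi_eq' he hd (z / e - t) (z % e) (Nat.mod_lt _ he0) hz]
  rw [phi_decomp he hd hz]
  have h3 : (e - 1) * (z / e - t) = (e - 1) * (z / e) - (e - 1) * t := Nat.mul_sub _ _ _
  have h4 : (e - 1) * t = t * (e - 1) := Nat.mul_comm _ _
  have h5 : (e - 1) * t ≤ (e - 1) * (z / e) := Nat.mul_le_mul_left _ ht
  omega

def maxM (s : Multiset ℕ) : ℕ := s.foldr max 0

lemma le_maxM {s : Multiset ℕ} {a : ℕ} (h : a ∈ s) : a ≤ maxM s := by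
  induction s using Multiset.induction with
  | empty => simp at h
  | cons b t ih =>
    rw [Multiset.mem_cons] at h
    unfold maxM at *
    rw [Multiset.foldr_cons]
    rcases h with h | h
    · subst h; exact le_max_left _ _
    · exact le_trans (ih h) (le_max_right _ _)

lemma maxM_mem {s : Multiset ℕ} (h : s ≠ 0) : maxM s ∈ s := by
  induction s using Multiset.induction with
  | empty => simp at h
  | cons b t ih =>
    unfold maxM at *
    rw [Multiset.foldr_cons]
    rcases Nat.lt_or_ge b (Multiset.foldr max 0 t) with h1 | h1
    · rw [max_eq_right h1.le]
      have ht : t ≠ 0 := by rintro rfl; simp at h1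
      exact Multiset.mem_cons_of_mem (ih ht)
    · rw [max_eq_left h1]; exact Multiset.mem_cons_self _ _

lemma domMS_iff (I J : Multiset ℕ) :
    DomMS I J ↔ Multiset.card I = Multiset.card J ∧
      ∀ t, Multiset.card (J.filter (t ≤ ·)) ≤ Multiset.card (I.filter (t ≤ ·)) := by
  constructor
  · intro h
    induction h with
    | zero => simp
    | @cons a b I' J' hab h ih =>
      refine ⟨by simp [ih.1], fun t => ?_⟩
      rw [Multiset.filter_cons, Multiset.filter_cons, Multiset.card_add, Multiset.card_add]
      have := ih.2 t
      by_cases h1 : t ≤ b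
      · have h2 : t ≤ a := le_trans h1 hab
        simp [h1, h2]; omega
      · simp [h1]
        split <;> simp <;> omega
  · rintro ⟨hc, hf⟩
    obtain ⟨n, hn⟩ : ∃ n, Multiset.card I = n := ⟨_, rfl⟩
    induction n generalizing I J with
    | zero =>
      have hI : I = 0 := Multiset.card_eq_zero.mp hn
      have hJ : J = 0 := Multiset.card_eq_zero.mp (by omega)
      rw [hI, hJ]; exact Multiset.Rel.zero
    | succ n ih =>
      have hI0 : I ≠ 0 := by rintro rfl; simp at hn
      have hJ0 : J ≠ 0 := by
        rintro rfl; rw [Multiset.card_zero] at hc; omega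
      set a := maxM I with hA
      set b := maxM J with hB
      have haI : a ∈ I := maxM_mem hI0
      have hbJ : b ∈ J := maxM_mem hJ0
      have hba : b ≤ a := by
        have h1 : 0 < Multiset.card (J.filter (b ≤ ·)) := by
          rw [Multiset.card_pos_iff_exists_mem]
          exact ⟨b, Multiset.mem_filter.mpr ⟨hbJ, le_refl b⟩⟩
        have h2 := lt_of_lt_of_le h1 (hf b)
        rw [Multiset.card_pos_iff_exists_mem] at h2
        obtain ⟨x, hx⟩ := h2
        rw [Multiset.mem_filter] at hx
        exact le_trans hx.2 (le_maxM hx.1)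
      have hIe : I = a ::ₘ I.erase a := (Multiset.cons_erase haI).symm
      have hJe : J = b ::ₘ J.erase b := (Multiset.cons_erase hbJ).symm
      rw [hIe, hJe]
      refine Multiset.Rel.cons hba (ih _ _ ?_ ?_ ?_)
      · have h1 : Multiset.card I = Multiset.card (I.erase a) + 1 := by
          rw [hIe, Multiset.card_cons]; simp [Multiset.cons_erase haI]
        have h2 : Multiset.card J = Multiset.card (J.erase b) + 1 := by
          rw [hJe, Multiset.card_cons]; simp [Multiset.cons_erase hbJ]
        omega
      · intro t
        by_cases ht : t ≤ b
        · have hta : t ≤ a := le_trans ht hba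
          have h1 : Multiset.card (I.filter (t ≤ ·)) =
              Multiset.card ((I.erase a).filter (t ≤ ·)) + 1 := by
            conv_lhs => rw [hIe]
            rw [Multiset.filter_cons, if_pos hta]
            simp
          have h2 : Multiset.card (J.filter (t ≤ ·)) =
              Multiset.card ((J.erase b).filter (t ≤ ·)) + 1 := by
            conv_lhs => rw [hJe]
            rw [Multiset.filter_cons, if_pos ht]
            simp
          have := hf t
          omega
        · have : (J.erase b).filter (t ≤ ·) = 0 := by
            rw [Multiset.filter_eq_nil]
            intro x hx
            have : x ≤ b := le_maxM (Multiset.mem_of_mem_erase hx)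
            omega
          rw [this]
          simp
      · have h1 : Multiset.card I = Multiset.card (I.erase a) + 1 := by
          conv_lhs => rw [hIe]; rw [Multiset.card_cons]
        omega

lemma domMS_add_left_iff (D I J : Multiset ℕ) :
    DomMS (D + I) (D + J) ↔ DomMS I J := by
  rw [domMS_iff, domMS_iff]
  simp only [Multiset.card_add, Multiset.filter_add]
  constructor
  · rintro ⟨h1, h2⟩
    exact ⟨by omega, fun t => by have := h2 t; omega⟩
  · rintro ⟨h1, h2⟩
    exact ⟨by omega, fun t => by have := h2 t; omega⟩

lemma domMS_map_phi {e d : ℕ} (he : 2 ≤ e) (hd : d < e) {I J : Multiset ℕ}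
    (hI : ∀ x ∈ I, x % e ≠ d) (hJ : ∀ x ∈ J, x % e ≠ d) :
    DomMS (I.map (phi e d)) (J.map (phi e d)) ↔ DomMS I J := by
  unfold DomMS
  rw [Multiset.rel_map]
  constructor
  · intro h
    refine h.mono fun a haI b hbJ hab => ?_
    by_contra hc
    push_neg at hc
    exact absurd hab (not_le.mpr (phi_lt_phi he hd (hI a haI) (hJ b hbJ) hc))
  · intro h
    exact h.mono fun a haI b hbJ hab => phi_le_phi he hd (hJ b hbJ) (hI a haI) hab

def betaL (f : ℕ → ℕ) (r : ℕ) : List ℕ := (List.range r).map fun i => f i + (r - 1 - i)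

lemma betaSet_coe (f : ℕ → ℕ) (r : ℕ) : betaSet f r = ↑(betaL f r) := by
  rfl

lemma betaL_length (f : ℕ → ℕ) (r : ℕ) : (betaL f r).length = r := by
  simp [betaL]

lemma betaL_getElem (f : ℕ → ℕ) (r : ℕ) {i : ℕ} (hi : i < r) :
    (betaL f r)[i]'(by simp [betaL_length, hi]) = f i + (r - 1 - i) := by
  simp [betaL]

lemma betaL_pairwise {f : ℕ → ℕ} (hf : IsPartition f) (r : ℕ) :
    (betaL f r).Pairwise (· > ·) := by
  rw [List.pairwise_iff_getElem]
  intro i j hi hj hij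
  rw [betaL_length] at hi hj
  rw [betaL_getElem f r hi, betaL_getElem f r hj]
  have := hf.1 hij.le
  omega

lemma card_betaSet (f : ℕ → ℕ) (r : ℕ) : Multiset.card (betaSet f r) = r := by
  simp [betaSet]

lemma nodup_betaSet {f : ℕ → ℕ} (hf : IsPartition f) (r : ℕ) : (betaSet f r).Nodup := by
  rw [betaSet_coe, Multiset.coe_nodup]
  exact (betaL_pairwise hf r).imp (fun h => Nat.ne_of_gt h)

lemma sort_betaSet {f : ℕ → ℕ} (hf : IsPartition f) (r : ℕ) :
    (betaSet f r).sort (· ≤ ·) = (betaL f r).reverse := by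
  refine (fun hp h1 h2 => List.Perm.eq_of_pairwise' h1 h2 hp) ?_ (Multiset.pairwise_sort _ _) ?_
  · have h1 : ((betaSet f r).sort (· ≤ ·) : Multiset ℕ) = ↑(betaL f r).reverse := by
      rw [Multiset.sort_eq, betaSet_coe]
      exact (Multiset.coe_eq_coe.mpr (List.reverse_perm _).symm)
    exact Multiset.coe_eq_coe.mp h1
  · rw [List.pairwise_reverse]
    exact (betaL_pairwise hf r).imp (fun h => le_of_lt h)

lemma conj_le_of_zero {f : ℕ → ℕ} {n : ℕ} (h : ∀ i, n ≤ i → f i = 0) : conj f 0 ≤ n := by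
  unfold conj
  have hsub : {j : ℕ | 0 + 1 ≤ f j} ⊆ ↑(Finset.range n) := by
    intro j hj
    simp only [Set.mem_setOf_eq] at hj
    simp only [Finset.coe_range, Set.mem_Iio]
    by_contra hc
    push_neg at hc
    rw [h j hc] at hj
    omega
  calc Nat.card {j : ℕ // 0 + 1 ≤ f j} = Set.ncard {j : ℕ | 0 + 1 ≤ f j} :=
        Nat.card_coe_set_eq {j : ℕ | 0 + 1 ≤ f j}
  _ ≤ Set.ncard (↑(Finset.range n) : Set ℕ) :=
        Set.ncard_le_ncard hsub (Set.toFinite _)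
  _ = n := by rw [Set.ncard_coe_finset, Finset.card_range]

lemma parts_zero {f : ℕ → ℕ} (hf : IsPartition f) {r : ℕ} (hr : conj f 0 ≤ r) :
    ∀ i, r ≤ i → f i = 0 := by
  have key : f r = 0 := by
    by_contra hc
    have h1 : ∀ j ≤ r, 1 ≤ f j := fun j hj => le_trans (by omega) (hf.1 hj)
    have hsub : ↑(Finset.range (r + 1)) ⊆ {j : ℕ | 0 + 1 ≤ f j} := by
      intro j hj
      simp only [Finset.coe_range, Set.mem_Iio] at hj
      exact h1 j (by omega)
    obtain ⟨N, hN⟩ := hf.2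
    have hfin : {j : ℕ | 0 + 1 ≤ f j}.Finite := by
      refine Set.Finite.subset (Set.finite_Iio N) ?_
      intro j hj
      simp only [Set.mem_setOf_eq] at hj
      simp only [Set.mem_Iio]
      by_contra hc2
      push_neg at hc2
      rw [hN j hc2] at hj
      omega
    have : r + 1 ≤ conj f 0 := by
      unfold conj
      calc r + 1 = Set.ncard (↑(Finset.range (r + 1)) : Set ℕ) := by
            rw [Set.ncard_coe_finset, Finset.card_range]
      _ ≤ Set.ncard {j : ℕ | 0 + 1 ≤ f j} := Set.ncard_le_ncard hsub hfin
      _ = Nat.card {j : ℕ // 0 + 1 ≤ f j} := (Nat.card_coe_set_eq _).symm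
    omega
  intro i hi
  have := hf.1 hi
  omega

lemma partOfBeta_betaSet {f : ℕ → ℕ} (hf : IsPartition f) {r : ℕ} (hr : conj f 0 ≤ r) :
    partOfBeta (betaSet f r) = f := by
  funext i
  unfold partOfBeta
  rw [sort_betaSet hf r, List.reverse_reverse, card_betaSet]
  by_cases hi : i < r
  · rw [List.getD_eq_getElem _ _ (by rw [betaL_length]; exact hi), betaL_getElem f r hi]
    omega
  · push_neg at hi
    rw [List.getD_eq_default _ _ (by rw [betaL_length]; omega)]
    rw [parts_zero hf hr i hi]
    omega

def descL (C : Multiset ℕ) : List ℕ := (C.sort (· ≤ ·)).reverse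

lemma descL_length (C : Multiset ℕ) : (descL C).length = Multiset.card C := by
  simp [descL]

lemma descL_coe (C : Multiset ℕ) : (↑(descL C) : Multiset ℕ) = C := by
  unfold descL
  calc (↑(C.sort (· ≤ ·)).reverse : Multiset ℕ) = ↑(C.sort (· ≤ ·)) :=
        Multiset.coe_eq_coe.mpr (List.reverse_perm _)
  _ = C := Multiset.sort_eq _ _

lemma descL_pairwise {C : Multiset ℕ} (hC : C.Nodup) : (descL C).Pairwise (· > ·) := by
  unfold descL
  rw [List.pairwise_reverse]
  have hs : (C.sort (· ≤ ·)).Pairwise (· ≤ ·) := Multiset.pairwise_sort _ _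
  have hn : (C.sort (· ≤ ·)).Nodup := by
    rw [← Multiset.coe_nodup (l := C.sort (· ≤ ·)), Multiset.sort_eq]; exact hC
  exact (hs.and hn).imp (fun h => lt_of_le_of_ne h.1 h.2)

lemma sd_getElem {M : List ℕ} (hM : M.Pairwise (· > ·)) :
    ∀ t i (h : i + t < M.length), M[i + t]'h + t ≤ M[i]'(by omega) := by
  intro t
  induction t with
  | zero => intro i h; simp
  | succ n ih =>
    intro i h
    have h1 := ih i (by omega)
    have h2 : M[i + n + 1]'(by omega) < M[i + n]'(by omega) := by
      rw [List.pairwise_iff_getElem] at hM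
      exact hM (i + n) (i + n + 1) (by omega) (by omega) (by omega)
    have heq : M[i + (n + 1)]'h = M[i + n + 1]'(by omega) := rfl
    omega

lemma sd_getElem' {M : List ℕ} (hM : M.Pairwise (· > ·)) {i j : ℕ} (hij : i ≤ j)
    (hj : j < M.length) : M[j]'hj + (j - i) ≤ M[i]'(by omega) := by
  have h := sd_getElem hM (j - i) i (by omega)
  have heq : M[i + (j - i)]'(by omega) = M[j]'hj := by
    congr 1
    omega
  omega

lemma descL_ge {C : Multiset ℕ} (hC : C.Nodup) {i : ℕ} (hi : i < (descL C).length) :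
    Multiset.card C - 1 - i ≤ (descL C)[i] := by
  have hlen := descL_length C
  have h := sd_getElem' (descL_pairwise hC) (Nat.le_sub_one_of_lt hi) (by omega : (descL C).length - 1 < (descL C).length)
  omega

lemma partOfBeta_apply_lt {C : Multiset ℕ} {i : ℕ} (hi : i < Multiset.card C) :
    partOfBeta C i = (descL C)[i]'(by rw [descL_length]; exact hi) - (Multiset.card C - 1 - i) := by
  unfold partOfBeta descL
  rw [List.getD_eq_getElem _ _ (by simp [hi])]

lemma partOfBeta_apply_ge {C : Multiset ℕ} {i : ℕ} (hi : Multiset.card C ≤ i) :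
    partOfBeta C i = 0 := by
  unfold partOfBeta
  rw [List.getD_eq_default _ _ (by simp; omega)]
  omega

lemma isPartition_partOfBeta {C : Multiset ℕ} (hC : C.Nodup) : IsPartition (partOfBeta C) := by
  constructor
  · intro i j hij
    by_cases hj : j < Multiset.card C
    · have hi : i < Multiset.card C := by omega
      rw [partOfBeta_apply_lt hi, partOfBeta_apply_lt hj]
      have hlen : (descL C).length = Multiset.card C := descL_length C
      have h1 := sd_getElem' (descL_pairwise hC) hij (by rw [descL_length]; exact hj)
      have h3 := descL_ge hC (i := i) (by rw [descL_length]; exact hi)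
      have h4 := descL_ge hC (i := j) (by rw [descL_length]; exact hj)
      omega
    · rw [partOfBeta_apply_ge (by omega)]
      omega
  · exact ⟨Multiset.card C, fun i hi => partOfBeta_apply_ge hi⟩

lemma conj_partOfBeta (C : Multiset ℕ) : conj (partOfBeta C) 0 ≤ Multiset.card C :=
  conj_le_of_zero fun i hi => partOfBeta_apply_ge hi

lemma betaSet_partOfBeta {C : Multiset ℕ} (hC : C.Nodup) :
    betaSet (partOfBeta C) (Multiset.card C) = C := by
  conv_rhs => rw [← descL_coe C]
  rw [betaSet_coe]
  congr 1
  apply List.ext_getElem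
  · rw [betaL_length, descL_length]
  · intro i h1 h2
    rw [betaL_length] at h1
    rw [betaL_getElem _ _ h1, partOfBeta_apply_lt h1]
    have := descL_ge hC (i := i) (by rw [descL_length]; exact h1)
    omega

lemma coreBeta_congr {e : ℕ} {B1 B2 : Multiset ℕ}
    (h : ∀ j, j < e → runnerCount e j B1 = runnerCount e j B2) :
    coreBeta e B1 = coreBeta e B2 := by
  unfold coreBeta
  apply Multiset.bind_congr
  intro j hj
  rw [h j (Multiset.mem_range.mp hj)]

lemma filter_bind {α β : Type*} (p : β → Prop) [DecidablePred p] (s : Multiset α)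
    (f : α → Multiset β) :
    (s.bind f).filter p = s.bind fun a => (f a).filter p := by
  induction s using Multiset.induction with
  | empty => simp
  | cons a t ih => rw [Multiset.cons_bind, Multiset.cons_bind, Multiset.filter_add, ih]

lemma runnerCount_coreBeta {e : ℕ} (he : 0 < e) (B : Multiset ℕ) {j : ℕ} (hj : j < e) :
    runnerCount e j (coreBeta e B) = runnerCount e j B := by
  unfold runnerCount coreBeta
  rw [filter_bind, Multiset.card_bind]
  have h1 : ∀ j0 ∈ Multiset.range e,
      (Multiset.card ∘ fun a => Multiset.filter (fun b => b % e = j)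
        (Multiset.map (fun i => a + i * e) (Multiset.range (runnerCount e a B)))) j0 =
      (fun j0 => if j0 = j then runnerCount e j B else 0) j0 := by
    intro j0 hj0
    rw [Multiset.mem_range] at hj0
    simp only [Function.comp_apply]
    rw [Multiset.filter_map]
    have hmod : ∀ i : ℕ, ((fun i => j0 + i * e) i) % e = j0 := by
      intro i
      rw [Nat.add_mul_mod_self_right]
      exact Nat.mod_eq_of_lt hj0
    by_cases hjj : j0 = j
    · subst hjj
      rw [if_pos rfl]
      have : Multiset.filter ((fun b => b % e = j0) ∘ fun i => j0 + i * e)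
          (Multiset.range (runnerCount e j0 B)) = Multiset.range (runnerCount e j0 B) := by
        apply Multiset.filter_eq_self.mpr
        intro i _
        exact hmod i
      rw [this, Multiset.card_map, Multiset.card_range]
    · rw [if_neg hjj]
      have : Multiset.filter ((fun b => b % e = j) ∘ fun i => j0 + i * e)
          (Multiset.range (runnerCount e j0 B)) = 0 := by
        apply Multiset.filter_eq_nil.mpr
        intro i _
        simp only [Function.comp_apply]
        rw [hmod i]
        exact hjj
      rw [this]
      simp
  rw [Multiset.map_congr rfl h1]
  have : Multiset.range e = (Finset.range e).val := rfl
  rw [this]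
  have h2 : Multiset.sum (Multiset.map (fun j0 => if j0 = j then runnerCount e j B else 0)
      (Finset.range e).val) = ∑ j0 ∈ Finset.range e, if j0 = j then runnerCount e j B else 0 := rfl
  rw [h2, Finset.sum_ite_eq' (Finset.range e) j fun _ => runnerCount e j B,
    if_pos (Finset.mem_range.mpr hj)]
  rfl

lemma coreBeta_eq_iff {e : ℕ} (he : 0 < e) (B1 B2 : Multiset ℕ) :
    coreBeta e B1 = coreBeta e B2 ↔ ∀ j, j < e → runnerCount e j B1 = runnerCount e j B2 := by
  constructor
  · intro h j hj
    rw [← runnerCount_coreBeta he B1 hj, ← runnerCount_coreBeta he B2 hj, h]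
  · exact coreBeta_congr

lemma bind_filter_ite {α : Type*} (p : α → Prop) [DecidablePred p] (s : Multiset α)
    (f : α → Multiset ℕ) :
    (s.bind fun a => if p a then f a else 0) = (s.filter p).bind f := by
  induction s using Multiset.induction with
  | empty => simp
  | cons a t ih =>
    rw [Multiset.cons_bind, Multiset.filter_cons, ih]
    split
    · rw [Multiset.singleton_add, Multiset.cons_bind]
    · simp

lemma eExt_filter {e : ℕ} (he : 0 < e) (p : ℕ → Prop) [DecidablePred p]
    (hp : ∀ x y : ℕ, x % e = y % e → (p x ↔ p y)) (B : Multiset ℕ) :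
    (eExt e B).filter p = eExt e (B.filter p) := by
  unfold eExt
  rw [filter_bind]
  have h1 : ∀ b ∈ B, ((Multiset.range (b / e + 1)).map fun j => b - j * e).filter p =
      (if p b then (Multiset.range (b / e + 1)).map fun j => b - j * e else 0) := by
    intro b _
    have hmod : ∀ j ∈ Multiset.range (b / e + 1), ((b - j * e) % e) = b % e := by
      intro j hj
      rw [Multiset.mem_range] at hj
      have hje : j * e ≤ b := by
        calc j * e ≤ (b / e) * e := Nat.mul_le_mul_right _ (by omega)
        _ ≤ b := Nat.div_mul_le_self _ _
      conv_rhs => rw [← Nat.sub_add_cancel hje]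
      rw [Nat.add_mul_mod_self_right]
    split
    · next hb =>
      apply Multiset.filter_eq_self.mpr
      intro x hx
      rw [Multiset.mem_map] at hx
      obtain ⟨j, hj, rfl⟩ := hx
      exact (hp _ _ (hmod j hj)).mpr hb
    · next hb =>
      apply Multiset.filter_eq_nil.mpr
      intro x hx
      rw [Multiset.mem_map] at hx
      obtain ⟨j, hj, rfl⟩ := hx
      exact fun hc => hb ((hp _ _ (hmod j hj)).mp hc)
  rw [Multiset.bind_congr h1, bind_filter_ite]

lemma eExt_removeRunner {e d : ℕ} (he : 2 ≤ e) (hd : d < e) (B : Multiset ℕ) :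
    eExt (e - 1) (removeRunnerB e d B) =
      ((eExt e B).filter fun x => ¬ x % e = d).map (phi e d) := by
  rw [eExt_filter (by omega : 0 < e) _ (fun x y h => by rw [h]) B]
  unfold removeRunnerB eExt
  rw [Multiset.bind_map, Multiset.map_bind]
  apply Multiset.bind_congr
  intro b hb
  rw [Multiset.mem_filter] at hb
  have hbd : b % e ≠ d := hb.2
  have hdiv : phi e d b / (e - 1) = b / e := (phi_mod_div he hd hbd).2
  rw [hdiv, Multiset.map_map]
  apply Multiset.map_congr rfl
  intro t ht
  rw [Multiset.mem_range] at ht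
  simp only [Function.comp_apply]
  exact (phi_sub he hd hbd (by omega : t ≤ b / e)).symm

lemma kempty_filter {e d : ℕ} (he : 0 < e) (hd : d < e) {B : Multiset ℕ} (hB : B.Nodup)
    (hke : ∀ b ∈ B, b % e = d → b < d + runnerCount e d B * e) :
    B.filter (fun b => b % e = d) =
      (Multiset.range (runnerCount e d B)).map fun i => d + i * e := by
  set c := runnerCount e d B with hc
  have hcard : Multiset.card (B.filter fun b => b % e = d) = c := rfl
  apply Multiset.eq_of_le_of_card_le
  · rw [Multiset.le_iff_subset (hB.filter _)]
    intro x hx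
    rw [Multiset.mem_filter] at hx
    obtain ⟨hxB, hxd⟩ := hx
    have hlt := hke x hxB hxd
    have hxe : x / e * e + d = x := by
      conv_rhs => rw [← Nat.div_add_mod' x e]
      rw [hxd]
    rw [Multiset.mem_map]
    refine ⟨x / e, Multiset.mem_range.mpr ?_, by omega⟩
    by_contra hcon
    push_neg at hcon
    have h3 : c * e ≤ x / e * e := Nat.mul_le_mul_right _ hcon
    omega
  · rw [hcard, Multiset.card_map, Multiset.card_range]

lemma runnerCount_removeRunner {e d : ℕ} (he : 2 ≤ e) (hd : d < e) (B : Multiset ℕ)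
    {j' : ℕ} (hj' : j' < e - 1) :
    runnerCount (e - 1) j' (removeRunnerB e d B) =
      runnerCount e (if j' < d then j' else j' + 1) B := by
  unfold runnerCount removeRunnerB
  rw [Multiset.filter_map, Multiset.card_map, Multiset.filter_filter]
  congr 1
  apply Multiset.filter_congr
  intro b _
  constructor
  · rintro ⟨hphi, hbd⟩
    simp only [Function.comp_apply] at hphi
    have hmod := (phi_mod_div he hd hbd).1
    rw [hmod] at hphi
    have hbe : b % e < e := Nat.mod_lt _ (by omega)
    split <;> split at hphi <;> omega
  · intro hb
    have hbe : b % e < e := Nat.mod_lt _ (by omega)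
    have hbd : ¬ b % e = d := by split at hb <;> omega
    have hmod := (phi_mod_div he hd hbd).1
    refine ⟨?_, hbd⟩
    simp only [Function.comp_apply]
    rw [hmod]
    split at hb <;> split <;> omega

def psi (e d y : ℕ) : ℕ := y + (y + (e - 1) - d) / (e - 1)

lemma psi_eq {e d : ℕ} (he : 2 ≤ e) (hd : d < e) (m j' : ℕ) (hj' : j' < e - 1) :
    psi e d ((e - 1) * m + j') = e * m + (if j' < d then j' else j' + 1) := by
  have h1 : (e - 1) * m + j' + (e - 1) - d = (j' + (e - 1) - d) + (e - 1) * m := by omega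
  have h2 : (j' + (e - 1) - d) / (e - 1) = if j' < d then 0 else 1 := by
    split
    · exact Nat.div_eq_of_lt (by omega)
    · rw [Nat.div_eq_sub_div (by omega) (by omega), Nat.div_eq_of_lt (by omega)]
  have h3 : ((j' + (e - 1) - d) + (e - 1) * m) / (e - 1) =
      (j' + (e - 1) - d) / (e - 1) + m := by
    rw [Nat.add_mul_div_left _ _ (by omega : 0 < e - 1)]
  have hm : e * m = (e - 1) * m + m := by
    cases e with
    | zero => omega
    | succ e' => simp [Nat.succ_sub_one, Nat.succ_mul]
  unfold psi
  rw [h1, h3, h2]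
  revert hm
  generalize e * m = P
  generalize (e - 1) * m = Q
  intro hm
  split <;> omega

lemma psi_decomp {e d : ℕ} (he : 2 ≤ e) (hd : d < e) (y : ℕ) :
    psi e d y = e * (y / (e - 1)) + (if y % (e - 1) < d then y % (e - 1) else y % (e - 1) + 1) := by
  conv_lhs => rw [← Nat.div_add_mod y (e - 1)]
  exact psi_eq he hd (y / (e - 1)) (y % (e - 1)) (Nat.mod_lt _ (by omega))

lemma psi_mod_ne {e d : ℕ} (he : 2 ≤ e) (hd : d < e) (y : ℕ) :
    psi e d y % e = (if y % (e - 1) < d then y % (e - 1) else y % (e - 1) + 1) ∧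
      psi e d y % e ≠ d := by
  have hj' : y % (e - 1) < e - 1 := Nat.mod_lt _ (by omega)
  have h1 : psi e d y % e = (if y % (e - 1) < d then y % (e - 1) else y % (e - 1) + 1) := by
    rw [psi_decomp he hd]
    rw [Nat.add_comm, Nat.add_mul_mod_self_left]
    exact Nat.mod_eq_of_lt (by split <;> omega)
  refine ⟨h1, ?_⟩
  rw [h1]
  split <;> omega

lemma phi_psi {e d : ℕ} (he : 2 ≤ e) (hd : d < e) (y : ℕ) :
    phi e d (psi e d y) = y := by
  have hj' : y % (e - 1) < e - 1 := Nat.mod_lt _ (by omega)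
  rw [psi_decomp he hd]
  rw [phi_eq' he hd (y / (e - 1)) _ (by split <;> omega) (by split <;> omega)]
  have : (if (if y % (e - 1) < d then y % (e - 1) else y % (e - 1) + 1) < d
      then (if y % (e - 1) < d then y % (e - 1) else y % (e - 1) + 1)
      else (if y % (e - 1) < d then y % (e - 1) else y % (e - 1) + 1) - 1) = y % (e - 1) := by
    split <;> first | omega | (split <;> omega)
  rw [this]
  conv_rhs => rw [← Nat.div_add_mod y (e - 1)]

lemma psi_phi {e d : ℕ} (he : 2 ≤ e) (hd : d < e) {z : ℕ} (hz : z % e ≠ d) :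
    psi e d (phi e d z) = z := by
  have hje : z % e < e := Nat.mod_lt _ (by omega)
  rw [phi_decomp he hd hz]
  rw [psi_eq he hd (z / e) _ (by split <;> omega)]
  have : (if (if z % e < d then z % e else z % e - 1) < d
      then (if z % e < d then z % e else z % e - 1)
      else (if z % e < d then z % e else z % e - 1) + 1) = z % e := by
    split <;> first | omega | (split <;> omega)
  rw [this]
  exact Nat.div_add_mod z e

lemma card_removeRunnerB (e d : ℕ) (B : Multiset ℕ) :
    Multiset.card (removeRunnerB e d B) = Multiset.card B - runnerCount e d B := by
  unfold removeRunnerB runnerCount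
  rw [Multiset.card_map]
  have := congrArg Multiset.card (Multiset.filter_add_not (fun b => b % e = d) B)
  rw [Multiset.card_add] at this
  omega

lemma nodup_removeRunnerB {e d : ℕ} (he : 2 ≤ e) (hd : d < e) {B : Multiset ℕ}
    (hB : B.Nodup) : (removeRunnerB e d B).Nodup := by
  unfold removeRunnerB
  refine Multiset.Nodup.map_on ?_ (hB.filter _)
  intro x hx y hy hxy
  rw [Multiset.mem_filter] at hx hy
  exact phi_injOn he hd hx.2 hy.2 hxy

lemma betaSet_removeRunnerP {e k r : ℕ} (he : 3 ≤ e) {g : ℕ → ℕ} (hg : IsPartition g) :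
    betaSet (removeRunnerP e k r g) (r - runnerCount e ((r + k) % e) (betaSet g r)) =
      removeRunnerB e ((r + k) % e) (betaSet g r) := by
  have hd : (r + k) % e < e := Nat.mod_lt _ (by omega)
  have hcard : Multiset.card (removeRunnerB e ((r + k) % e) (betaSet g r)) =
      r - runnerCount e ((r + k) % e) (betaSet g r) := by
    rw [card_removeRunnerB, card_betaSet]
  unfold removeRunnerP
  rw [← hcard]
  exact betaSet_partOfBeta (nodup_removeRunnerB (by omega) hd (nodup_betaSet hg r))

lemma removed_core_congr {e d : ℕ} (he : 3 ≤ e) (hd : d < e) {B1 B2 : Multiset ℕ}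
    (h : coreBeta e B1 = coreBeta e B2) :
    coreBeta (e - 1) (removeRunnerB e d B1) = coreBeta (e - 1) (removeRunnerB e d B2) := by
  apply coreBeta_congr
  intro j' hj'
  rw [runnerCount_removeRunner (by omega) hd B1 hj',
    runnerCount_removeRunner (by omega) hd B2 hj']
  exact (coreBeta_eq_iff (by omega) B1 B2).mp h _ (by split <;> omega)

lemma removeRunnerB_inj {e d : ℕ} (he : 2 ≤ e) (hd : d < e) {B1 B2 : Multiset ℕ}
    (h : removeRunnerB e d B1 = removeRunnerB e d B2)
    (hfil : B1.filter (fun b => b % e = d) = B2.filter (fun b => b % e = d)) :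
    B1 = B2 := by
  have key : ∀ B : Multiset ℕ, (B.filter fun b => ¬ b % e = d) =
      (removeRunnerB e d B).map (psi e d) := by
    intro B
    unfold removeRunnerB
    rw [Multiset.map_map]
    conv_lhs => rw [← Multiset.map_id (B.filter fun b => ¬ b % e = d)]
    apply Multiset.map_congr rfl
    intro x hx
    rw [Multiset.mem_filter] at hx
    exact (psi_phi he hd hx.2).symm
  have h2 : (B1.filter fun b => ¬ b % e = d) = (B2.filter fun b => ¬ b % e = d) := by
    rw [key B1, key B2, h]
  calc B1 = B1.filter (fun b => b % e = d) + B1.filter (fun b => ¬ b % e = d) :=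
        (Multiset.filter_add_not _ _).symm
  _ = B2.filter (fun b => b % e = d) + B2.filter (fun b => ¬ b % e = d) := by rw [hfil, h2]
  _ = B2 := Multiset.filter_add_not _ _

lemma betaSet_part_removeRunnerB {e d r : ℕ} (he : 3 ≤ e) (hd : d < e) {g : ℕ → ℕ}
    (hg : IsPartition g) :
    betaSet (partOfBeta (removeRunnerB e d (betaSet g r)))
        (r - runnerCount e d (betaSet g r)) = removeRunnerB e d (betaSet g r) := by
  have hcard : Multiset.card (removeRunnerB e d (betaSet g r)) =
      r - runnerCount e d (betaSet g r) := by
    rw [card_removeRunnerB, card_betaSet]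
  rw [← hcard]
  exact betaSet_partOfBeta (nodup_removeRunnerB (by omega) hd (nodup_betaSet hg r))

theorem main_aux (e r d c : ℕ) (he : 3 ≤ e) (hd : d < e) (f : ℕ → ℕ)
    (hf : IsPartition f) (hr : conj f 0 ≤ r)
    (hc : c = runnerCount e d (betaSet f r))
    (hke : ∀ b ∈ betaSet f r, b % e = d → b < d + runnerCount e d (betaSet f r) * e) :
    Set.BijOn (fun g => partOfBeta (removeRunnerB e d (betaSet g r)))
      {g | IsPartition g ∧ conj g 0 ≤ r ∧
        (∀ b ∈ betaSet g r, b % e = d → b < d + runnerCount e d (betaSet g r) * e) ∧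
        coreBeta e (betaSet g r) = coreBeta e (betaSet f r)}
      {p | IsPartition p ∧ conj p 0 ≤ r - c ∧
        coreBeta (e-1) (betaSet p (r - c)) =
          coreBeta (e-1) (betaSet (partOfBeta (removeRunnerB e d (betaSet f r))) (r - c))} ∧
    ∀ g, IsPartition g → conj g 0 ≤ r →
      (∀ b ∈ betaSet g r, b % e = d → b < d + runnerCount e d (betaSet g r) * e) →
      coreBeta e (betaSet g r) = coreBeta e (betaSet f r) →
      ((coreBeta e (betaSet g r) = coreBeta e (betaSet f r) ∧
          DomMS (eExt e (betaSet g r)) (eExt e (betaSet f r))) ↔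
        (coreBeta (e-1) (betaSet (partOfBeta (removeRunnerB e d (betaSet g r))) (r - c)) =
            coreBeta (e-1) (betaSet (partOfBeta (removeRunnerB e d (betaSet f r))) (r - c)) ∧
          DomMS (eExt (e-1) (betaSet (partOfBeta (removeRunnerB e d (betaSet g r))) (r - c)))
                (eExt (e-1) (betaSet (partOfBeta (removeRunnerB e d (betaSet f r))) (r - c))))) := by
  have he2 : 2 ≤ e := by omega
  have he0 : 0 < e := by omega
  have he1 : 0 < e - 1 := by omega
  have hcr : c ≤ r := by
    have h := Multiset.card_le_card (Multiset.filter_le (fun b => b % e = d) (betaSet f r))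
    rw [card_betaSet] at h
    rw [hc]
    exact h
  -- the beta set of f's image
  have hbetaF : betaSet (partOfBeta (removeRunnerB e d (betaSet f r))) (r - c) =
      removeRunnerB e d (betaSet f r) := by
    rw [hc]
    exact betaSet_part_removeRunnerB he hd hf
  -- facts for any member of the source
  have memfacts : ∀ g : ℕ → ℕ, IsPartition g →
      (∀ b ∈ betaSet g r, b % e = d → b < d + runnerCount e d (betaSet g r) * e) →
      coreBeta e (betaSet g r) = coreBeta e (betaSet f r) →
      (runnerCount e d (betaSet g r) = c ∧
       betaSet (partOfBeta (removeRunnerB e d (betaSet g r))) (r - c) =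
          removeRunnerB e d (betaSet g r) ∧
       (betaSet g r).filter (fun b => b % e = d) =
          (Multiset.range c).map (fun i => d + i * e)) := by
    intro g hg1 hg3 hg4
    have hcnt : runnerCount e d (betaSet g r) = c := by
      rw [hc]
      exact (coreBeta_eq_iff he0 _ _).mp hg4 d hd
    refine ⟨hcnt, ?_, ?_⟩
    · have h := betaSet_part_removeRunnerB (r := r) he hd hg1
      rwa [hcnt] at h
    · have h := kempty_filter he0 hd (nodup_betaSet hg1 r) hg3
      rwa [hcnt] at h
  -- MapsTo
  have hMapsTo : ∀ g : ℕ → ℕ, IsPartition g → conj g 0 ≤ r →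
      (∀ b ∈ betaSet g r, b % e = d → b < d + runnerCount e d (betaSet g r) * e) →
      coreBeta e (betaSet g r) = coreBeta e (betaSet f r) →
      (IsPartition (partOfBeta (removeRunnerB e d (betaSet g r))) ∧
       conj (partOfBeta (removeRunnerB e d (betaSet g r))) 0 ≤ r - c ∧
       coreBeta (e-1) (betaSet (partOfBeta (removeRunnerB e d (betaSet g r))) (r - c)) =
         coreBeta (e-1) (betaSet (partOfBeta (removeRunnerB e d (betaSet f r))) (r - c))) := by
    intro g hg1 hg2 hg3 hg4
    obtain ⟨hcnt, hbetaG, hfilG⟩ := memfacts g hg1 hg3 hg4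
    refine ⟨isPartition_partOfBeta (nodup_removeRunnerB he2 hd (nodup_betaSet hg1 r)), ?_, ?_⟩
    · have h := conj_partOfBeta (removeRunnerB e d (betaSet g r))
      rw [card_removeRunnerB, card_betaSet, hcnt] at h
      exact h
    · rw [hbetaG, hbetaF]
      exact removed_core_congr he hd hg4
  constructor
  · constructor
    · -- MapsTo
      intro g hg
      obtain ⟨hg1, hg2, hg3, hg4⟩ := hg
      exact hMapsTo g hg1 hg2 hg3 hg4
    constructor
    · -- InjOn
      intro g1 hg1 g2 hg2 heq
      obtain ⟨h11, h12, h13, h14⟩ := hg1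
      obtain ⟨h21, h22, h23, h24⟩ := hg2
      obtain ⟨hcnt1, hbeta1, hfil1⟩ := memfacts g1 h11 h13 h14
      obtain ⟨hcnt2, hbeta2, hfil2⟩ := memfacts g2 h21 h23 h24
      have hrem : removeRunnerB e d (betaSet g1 r) = removeRunnerB e d (betaSet g2 r) := by
        rw [← hbeta1, ← hbeta2]
        simp only at heq
        rw [heq]
      have hB : betaSet g1 r = betaSet g2 r :=
        removeRunnerB_inj he2 hd hrem (by rw [hfil1, hfil2])
      calc g1 = partOfBeta (betaSet g1 r) := (partOfBeta_betaSet h11 h12).symm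
      _ = partOfBeta (betaSet g2 r) := by rw [hB]
      _ = g2 := partOfBeta_betaSet h21 h22
    · -- SurjOn
      intro p hp
      obtain ⟨hp1, hp2, hp3⟩ := hp
      set C := betaSet p (r - c) with hC
      set T : Multiset ℕ := (Multiset.range c).map (fun i => d + i * e) with hT
      set B : Multiset ℕ := C.map (psi e d) + T with hB
      have hTmod : ∀ x ∈ T, x % e = d := by
        intro x hx
        rw [hT, Multiset.mem_map] at hx
        obtain ⟨i, _, rfl⟩ := hx
        rw [Nat.add_mul_mod_self_right]
        exact Nat.mod_eq_of_lt hd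
      have hCmod : ∀ x ∈ C.map (psi e d), ¬ x % e = d := by
        intro x hx
        rw [Multiset.mem_map] at hx
        obtain ⟨y, _, rfl⟩ := hx
        exact (psi_mod_ne he2 hd y).2
      have hBnodup : B.Nodup := by
        rw [hB, Multiset.nodup_add]
        refine ⟨?_, ?_, ?_⟩
        · refine Multiset.Nodup.map ?_ (nodup_betaSet hp1 _)
          intro a b hab
          have h := congrArg (phi e d) hab
          rwa [phi_psi he2 hd, phi_psi he2 hd] at h
        · rw [hT]
          refine Multiset.Nodup.map ?_ (Multiset.nodup_range c)
          intro a b hab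
          dsimp only at hab
          have : a * e = b * e := by omega
          exact Nat.eq_of_mul_eq_mul_right he0 this
        · exact Multiset.disjoint_left.mpr (fun {a} ha hat => (hCmod a ha) (hTmod a hat))
      have hcardB : Multiset.card B = r := by
        rw [hB, Multiset.card_add, Multiset.card_map, hC, card_betaSet, hT,
          Multiset.card_map, Multiset.card_range]
        omega
      have hbetag : betaSet (partOfBeta B) r = B := by
        have h := betaSet_partOfBeta hBnodup
        rwa [hcardB] at h
      have hfilB : B.filter (fun b => b % e = d) = T := by
        rw [hB, Multiset.filter_add]
        rw [Multiset.filter_eq_nil.mpr hCmod, Multiset.filter_eq_self.mpr hTmod, zero_add]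
      have hfilBn : B.filter (fun b => ¬ b % e = d) = C.map (psi e d) := by
        rw [hB, Multiset.filter_add]
        rw [Multiset.filter_eq_self.mpr hCmod, Multiset.filter_eq_nil.mpr
          (fun x hx h => h (hTmod x hx)), add_zero]
      have hcntB : runnerCount e d B = c := by
        unfold runnerCount
        rw [hfilB, hT, Multiset.card_map, Multiset.card_range]
      have hcoreg : coreBeta e B = coreBeta e (betaSet f r) := by
        apply coreBeta_congr
        intro j hj
        by_cases hjd : j = d
        · subst hjd
          rw [hcntB, hc]
        · -- transfer through the (e-1)-abacus
          have hj'lt : (if j < d then j else j - 1) < e - 1 := by split <;> omega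
          have step1 : runnerCount e j B = runnerCount (e-1) (if j < d then j else j - 1) C := by
            unfold runnerCount
            rw [hB, Multiset.filter_add, Multiset.card_add]
            have hTz : T.filter (fun b => b % e = j) = 0 := by
              rw [Multiset.filter_eq_nil]
              intro x hx hxj
              exact hjd (hxj.symm.trans (hTmod x hx))
            rw [hTz, Multiset.card_zero, Nat.add_zero, Multiset.filter_map,
              Multiset.card_map]
            congr 1
            apply Multiset.filter_congr
            intro y _
            simp only [Function.comp_apply]
            rw [(psi_mod_ne he2 hd y).1]
            have hym : y % (e - 1) < e - 1 := Nat.mod_lt _ he1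
            constructor
            · intro h
              split at h <;> split <;> omega
            · intro h
              split <;> split at h <;> omega
          have step2 : runnerCount (e-1) (if j < d then j else j - 1) C =
              runnerCount (e-1) (if j < d then j else j - 1)
                (removeRunnerB e d (betaSet f r)) := by
            rw [← hbetaF]
            exact (coreBeta_eq_iff he1 _ _).mp hp3 _ hj'lt
          have step3 := runnerCount_removeRunner he2 hd (betaSet f r) hj'lt
          have hback : (if (if j < d then j else j - 1) < d then (if j < d then j else j - 1)
              else (if j < d then j else j - 1) + 1) = j := by
            rcases Nat.lt_or_ge j d with h | h
            · rw [if_pos h, if_pos h]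
            · have h1 : ¬ j < d := by omega
              have h2 : ¬ (j - 1 < d) := by omega
              rw [if_neg h1, if_neg h2]
              omega
          rw [step1, step2, step3, hback]
      refine ⟨partOfBeta B, ⟨isPartition_partOfBeta hBnodup, ?_, ?_, ?_⟩, ?_⟩
      · have h := conj_partOfBeta B
        rwa [hcardB] at h
      · intro b hb hbd
        rw [hbetag] at hb ⊢
        rw [hcntB]
        have hbT : b ∈ T := by
          have : b ∈ B.filter (fun b => b % e = d) := Multiset.mem_filter.mpr ⟨hb, hbd⟩
          rwa [hfilB] at this
        rw [hT, Multiset.mem_map] at hbT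
        obtain ⟨i, hi, rfl⟩ := hbT
        rw [Multiset.mem_range] at hi
        have : i * e < c * e := (Nat.mul_lt_mul_right he0).mpr hi
        omega
      · rw [hbetag]
        exact hcoreg
      · -- the image is p
        simp only
        have h1 : removeRunnerB e d (betaSet (partOfBeta B) r) = C := by
          rw [hbetag]
          unfold removeRunnerB
          rw [hfilBn, Multiset.map_map]
          conv_rhs => rw [← Multiset.map_id C]
          apply Multiset.map_congr rfl
          intro y _
          simp only [Function.comp_apply]
          exact phi_psi he2 hd y
        rw [h1, hC]
        exact partOfBeta_betaSet hp1 hp2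
  · -- dominance equivalence
    intro g hg1 hg2 hg3 hg4
    obtain ⟨hcnt, hbetaG, hfilG⟩ := memfacts g hg1 hg3 hg4
    have hfilF : (betaSet f r).filter (fun b => b % e = d) =
        (Multiset.range c).map (fun i => d + i * e) := (memfacts f hf hke rfl).2.2
    -- equality of the runner-d parts of the extensions
    have hDeq : (eExt e (betaSet g r)).filter (fun x => x % e = d) =
        (eExt e (betaSet f r)).filter (fun x => x % e = d) := by
      rw [eExt_filter he0 _ (fun x y h => by rw [h]) (betaSet g r),
        eExt_filter he0 _ (fun x y h => by rw [h]) (betaSet f r), hfilG, hfilF]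
    have hXg : eExt (e-1) (betaSet (partOfBeta (removeRunnerB e d (betaSet g r))) (r - c)) =
        ((eExt e (betaSet g r)).filter (fun x => ¬ x % e = d)).map (phi e d) := by
      rw [hbetaG, eExt_removeRunner he2 hd]
    have hXf : eExt (e-1) (betaSet (partOfBeta (removeRunnerB e d (betaSet f r))) (r - c)) =
        ((eExt e (betaSet f r)).filter (fun x => ¬ x % e = d)).map (phi e d) := by
      rw [hbetaF, eExt_removeRunner he2 hd]
    have hdom_iff : DomMS (eExt e (betaSet g r)) (eExt e (betaSet f r)) ↔
        DomMS (((eExt e (betaSet g r)).filter (fun x => ¬ x % e = d)).map (phi e d))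
              (((eExt e (betaSet f r)).filter (fun x => ¬ x % e = d)).map (phi e d)) := by
      rw [domMS_map_phi he2 hd (fun x hx => (Multiset.mem_filter.mp hx).2)
        (fun x hx => (Multiset.mem_filter.mp hx).2)]
      conv_lhs => rw [← Multiset.filter_add_not (fun x => x % e = d) (eExt e (betaSet g r)),
        ← Multiset.filter_add_not (fun x => x % e = d) (eExt e (betaSet f r)), hDeq]
      exact domMS_add_left_iff _ _ _
    constructor
    · rintro ⟨hcore, hdom⟩
      refine ⟨(hMapsTo g hg1 hg2 hg3 hg4).2.2, ?_⟩
      rw [hXg, hXf]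
      exact hdom_iff.mp hdom
    · rintro ⟨_, hdom⟩
      refine ⟨hg4, ?_⟩
      rw [hXg, hXf] at hdom
      exact hdom_iff.mpr hdom

/-- runner removal is a bijection between k-empty partitions with the
same e-core as λ and partitions with the same (e-1)-core as λ^{-k} (all displayed
with r, resp. r - c, beads), and it preserves and reflects the dominance order. -/
theorem stmt7 (e k r : ℕ) (he : 3 ≤ e) (hk : k < e) (f : ℕ → ℕ)
    (hf : IsPartition f) (hr : conj f 0 ≤ r) (hke : KEmpty e k r f) :
    Set.BijOn (removeRunnerP e k r)
      {g : ℕ → ℕ | IsPartition g ∧ conj g 0 ≤ r ∧ KEmpty e k r g ∧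
        coreBeta e (betaSet g r) = coreBeta e (betaSet f r)}
      {p : ℕ → ℕ | IsPartition p ∧
        conj p 0 ≤ r - runnerCount e ((r + k) % e) (betaSet f r) ∧
        coreBeta (e - 1) (betaSet p (r - runnerCount e ((r + k) % e) (betaSet f r))) =
          coreBeta (e - 1) (betaSet (removeRunnerP e k r f)
            (r - runnerCount e ((r + k) % e) (betaSet f r)))} ∧
    ∀ g : ℕ → ℕ, IsPartition g → conj g 0 ≤ r → KEmpty e k r g →
      coreBeta e (betaSet g r) = coreBeta e (betaSet f r) →
      (Dominates e r g f ↔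
        Dominates (e - 1) (r - runnerCount e ((r + k) % e) (betaSet f r))
          (removeRunnerP e k r g) (removeRunnerP e k r f)) := by
  have hd : (r + k) % e < e := Nat.mod_lt _ (by omega)
  exact main_aux e r ((r + k) % e) (runnerCount e ((r + k) % e) (betaSet f r)) he hd f hf hr
    rfl hke
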